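/- Let R be a commutative ring and let F ∈ R⟦x,y⟧ satisfy: F has zero constant coefficient, F(x,0) = x, F(0,y) = y, and F(F(x,y),z) = F(x,F(y,z)) (a one-dimensional formal group law). Let [n]_F(t) be the associated n-series, let p be a prime, and let j be a natural number not divisible by p. Then: (i) the difference ∏_{k=1}^{p-1} [j·k]_F(t) − ∏_{k=1}^{p-1} [k]_F(t) lies in the ideal of R⟦t⟧ generated by [p]_F(t); and (ii) the difference ∏_{k=1}^{p-1} F(x, [j·k]_F(t)) − ∏_{k=1}^{p-1} F(x, [k]_F(t)) lies in the ideal of R⟦x,t⟧ generated by [p]_F(t). -/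

import Mathlib

/-- Substitution of (multivariate) formal power series: for `a : σ → MvPowerSeries τ R`
(each entry having zero constant coefficient) and `f ∈ R⟦xₛ : s ∈ σ⟧`, the coefficient
of the monomial `d` in `f(a)` is the (finite) sum over exponents `e` of
`(coeff of e in f) * (coeff of d in ∏ₛ (a s)^(e s))`. -/
noncomputable def MvPowerSeries.substitute {σ τ R : Type*} [CommRing R]
    (a : σ → MvPowerSeries τ R) (f : MvPowerSeries σ R) : MvPowerSeries τ R :=
  fun d => ∑ᶠ e : σ →₀ ℕ, MvPowerSeries.coeff e f *
    MvPowerSeries.coeff d (e.prod fun s n => a s ^ n)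

/-- Substitution of a one-variable formal power series `g ∈ R⟦z⟧` at a
(multivariate) power series `s`, i.e. `g(s)`. -/
noncomputable def PowerSeries.substitute {τ R : Type*} [CommRing R]
    (s : MvPowerSeries τ R) (g : PowerSeries R) : MvPowerSeries τ R :=
  MvPowerSeries.substitute (fun _ : Unit => s) g

/-- The `n`-series `[n]_F(t)` of a two-variable formal power series `F ∈ R⟦x,y⟧`,
defined recursively by `[0]_F(t) = 0` and `[n+1]_F(t) = F([n]_F(t), t)`. -/
noncomputable def MvPowerSeries.nSeries {R : Type*} [CommRing R]
    (F : MvPowerSeries (Fin 2) R) : ℕ → PowerSeries R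
  | 0 => 0
  | n + 1 => MvPowerSeries.substitute ![MvPowerSeries.nSeries F n, PowerSeries.X] F


open Finset MvPowerSeries

section Deg
variable {σ : Type*} [Fintype σ]

/-- total degree of an exponent vector -/
def fdeg (d : σ →₀ ℕ) : ℕ := ∑ s, d s

lemma le_fdeg (d : σ →₀ ℕ) (s : σ) : d s ≤ fdeg d :=
  Finset.single_le_sum (fun _ _ => Nat.zero_le _) (Finset.mem_univ s)

lemma fdeg_add (d₁ d₂ : σ →₀ ℕ) : fdeg (d₁ + d₂) = fdeg d₁ + fdeg d₂ := by
  simp [fdeg, Finset.sum_add_distrib]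

lemma fdeg_eq_zero {d : σ →₀ ℕ} (h : fdeg d = 0) : d = 0 := by
  ext s
  have := le_fdeg d s
  rw [h, Nat.le_zero] at this
  simp [this]

lemma finite_fdeg_le [DecidableEq σ] (N : ℕ) : {e : σ →₀ ℕ | fdeg e ≤ N}.Finite := by
  apply Set.Finite.subset (Finset.Iic (Finsupp.equivFunOnFinite.symm fun _ => N)).finite_toSet
  intro e he
  simp only [Finset.coe_Iic, Set.mem_Iic]
  intro s
  exact le_trans (le_fdeg e s) he

end Deg

section Ord
variable {τ R : Type*} [Fintype τ] [CommRing R]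

/-- "order at least n" -/
def OrdGE (n : ℕ) (f : MvPowerSeries τ R) : Prop :=
  ∀ d : τ →₀ ℕ, fdeg d < n → MvPowerSeries.coeff d f = 0

lemma ordGE_mono {m n : ℕ} {f : MvPowerSeries τ R} (h : OrdGE n f) (hmn : m ≤ n) : OrdGE m f :=
  fun d hd => h d (lt_of_lt_of_le hd hmn)

lemma ordGE_one {f : MvPowerSeries τ R} (h : MvPowerSeries.constantCoeff f = 0) :
    OrdGE 1 f := by
  intro d hd
  have : d = 0 := fdeg_eq_zero (by omega)
  subst this
  simpa [MvPowerSeries.coeff_zero_eq_constantCoeff] using h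

lemma ordGE_mul [DecidableEq τ] {m n : ℕ} {f g : MvPowerSeries τ R} (hf : OrdGE m f)
    (hg : OrdGE n g) : OrdGE (m + n) (f * g) := by
  intro d hd
  rw [MvPowerSeries.coeff_mul]
  apply Finset.sum_eq_zero
  rintro ⟨d₁, d₂⟩ hmem
  rw [Finset.HasAntidiagonal.mem_antidiagonal] at hmem
  have hadd : fdeg d₁ + fdeg d₂ = fdeg d := by rw [← fdeg_add, hmem]
  rcases lt_or_ge (fdeg d₁) m with h1 | h1
  · rw [hf d₁ h1, zero_mul]
  · rw [hg d₂ (by omega), mul_zero]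

lemma ordGE_pow [DecidableEq τ] {f : MvPowerSeries τ R} (hf : OrdGE 1 f) (n : ℕ) :
    OrdGE n (f ^ n) := by
  induction n with
  | zero => intro d hd; omega
  | succ k ih =>
      rw [pow_succ]
      exact ordGE_mul ih hf

lemma ordGE_prod [DecidableEq τ] {ι : Type*} (t : Finset ι) (n : ι → ℕ)
    (f : ι → MvPowerSeries τ R) (h : ∀ i ∈ t, OrdGE (n i) (f i)) :
    OrdGE (∑ i ∈ t, n i) (∏ i ∈ t, f i) := by
  classical
  induction t using Finset.induction_on with
  | empty => intro d hd; rw [Finset.sum_empty] at hd; omega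
  | insert a s hx ih =>
      rw [Finset.sum_insert hx, Finset.prod_insert hx]
      exact ordGE_mul (h a (mem_insert_self a s)) (ih fun i hi => h i (mem_insert_of_mem hi))

lemma ordGE_finsupp_prod [DecidableEq τ] {σ : Type*} [Fintype σ] (e : σ →₀ ℕ)
    (a : σ → MvPowerSeries τ R) (ha : ∀ s, MvPowerSeries.constantCoeff (a s) = 0) :
    OrdGE (fdeg e) (e.prod fun s k => a s ^ k) := by
  rw [Finsupp.prod_fintype _ _ (fun i => pow_zero _)]
  exact ordGE_prod Finset.univ e (fun s => a s ^ e s)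
    (fun s _ => ordGE_pow (ordGE_one (ha s)) (e s))

end Ord
section Subst
open Finset MvPowerSeries

variable {σ τ R : Type*} [Fintype σ] [DecidableEq σ] [Fintype τ] [DecidableEq τ] [CommRing R]

lemma coeff_substitute_eq_sum (a : σ → MvPowerSeries τ R)
    (ha : ∀ s, MvPowerSeries.constantCoeff (a s) = 0) (f : MvPowerSeries σ R)
    (d : τ →₀ ℕ) {N : ℕ} (hN : fdeg d ≤ N) :
    MvPowerSeries.coeff d (MvPowerSeries.substitute a f) =
      ∑ e ∈ (finite_fdeg_le (σ := σ) N).toFinset,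
        MvPowerSeries.coeff e f * MvPowerSeries.coeff d (e.prod fun s k => a s ^ k) := by
  have : MvPowerSeries.coeff d (MvPowerSeries.substitute a f) =
      ∑ᶠ e : σ →₀ ℕ, MvPowerSeries.coeff e f *
        MvPowerSeries.coeff d (e.prod fun s k => a s ^ k) := rfl
  rw [this]
  apply finsum_eq_finset_sum_of_support_subset
  intro e he
  simp only [Function.mem_support] at he
  simp only [Set.Finite.coe_toFinset, Set.mem_setOf_eq]
  by_contra hcon
  push_neg at hcon
  exact he (by rw [ordGE_finsupp_prod e a ha d (by omega), mul_zero])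

lemma constantCoeff_substitute (a : σ → MvPowerSeries τ R)
    (ha : ∀ s, MvPowerSeries.constantCoeff (a s) = 0) (f : MvPowerSeries σ R)
    (hf : MvPowerSeries.coeff 0 f = 0) :
    MvPowerSeries.constantCoeff (MvPowerSeries.substitute a f) = 0 := by
  rw [← MvPowerSeries.coeff_zero_eq_constantCoeff_apply]
  have : MvPowerSeries.coeff (0 : τ →₀ ℕ) (MvPowerSeries.substitute a f) =
      ∑ᶠ e : σ →₀ ℕ, MvPowerSeries.coeff e f *
        MvPowerSeries.coeff 0 (e.prod fun s k => a s ^ k) := rfl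
  rw [this]
  apply finsum_eq_zero_of_forall_eq_zero
  intro e
  by_cases he : e = 0
  · subst he
    simp [Finsupp.prod_zero_index, hf]
  · rw [ordGE_finsupp_prod e a ha 0 ?_, mul_zero]
    have : fdeg (0 : τ →₀ ℕ) = 0 := by simp [fdeg]
    rw [this]
    by_contra hcon
    exact he (fdeg_eq_zero (by omega))

lemma substitute_sub (a : σ → MvPowerSeries τ R)
    (ha : ∀ s, MvPowerSeries.constantCoeff (a s) = 0) (f g : MvPowerSeries σ R) :
    MvPowerSeries.substitute a (f - g) =
      MvPowerSeries.substitute a f - MvPowerSeries.substitute a g := by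
  ext d
  rw [map_sub, coeff_substitute_eq_sum a ha _ d (le_refl (fdeg d)),
    coeff_substitute_eq_sum a ha f d (le_refl (fdeg d)),
    coeff_substitute_eq_sum a ha g d (le_refl (fdeg d)), ← Finset.sum_sub_distrib]
  apply Finset.sum_congr rfl
  intro e _
  rw [map_sub, sub_mul]

lemma substitute_mul (a : σ → MvPowerSeries τ R)
    (ha : ∀ s, MvPowerSeries.constantCoeff (a s) = 0) (f g : MvPowerSeries σ R) :
    MvPowerSeries.substitute a (f * g) =
      MvPowerSeries.substitute a f * MvPowerSeries.substitute a g := by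
  classical
  ext d
  set N := fdeg d with hNdef
  set T := (finite_fdeg_le (σ := σ) N).toFinset with hTdef
  set P : (σ →₀ ℕ) → MvPowerSeries τ R := fun e => e.prod fun s k => a s ^ k with hPdef
  have hmemT : ∀ e : σ →₀ ℕ, e ∈ T ↔ fdeg e ≤ N := by
    intro e; simp [hTdef, Set.Finite.mem_toFinset]
  have hP : ∀ e₁ e₂ : σ →₀ ℕ, P (e₁ + e₂) = P e₁ * P e₂ := by
    intro e₁ e₂
    exact Finsupp.prod_add_index' (fun s => pow_zero _) (fun s k₁ k₂ => pow_add _ _ _)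
  set h : (σ →₀ ℕ) × (σ →₀ ℕ) → R := fun q =>
    MvPowerSeries.coeff q.1 f * MvPowerSeries.coeff q.2 g *
      MvPowerSeries.coeff d (P q.1 * P q.2) with hhdef
  have hvanish : ∀ q : (σ →₀ ℕ) × (σ →₀ ℕ), N < fdeg q.1 + fdeg q.2 → h q = 0 := by
    intro q hq
    have : MvPowerSeries.coeff d (P q.1 * P q.2) = 0 :=
      ordGE_mul (ordGE_finsupp_prod q.1 a ha) (ordGE_finsupp_prod q.2 a ha) d hq
    rw [hhdef]; dsimp only; rw [this, mul_zero]
  -- LHS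
  have hL : MvPowerSeries.coeff d (MvPowerSeries.substitute a (f * g)) =
      ∑ q ∈ T.biUnion Finset.HasAntidiagonal.antidiagonal, h q := by
    rw [coeff_substitute_eq_sum a ha _ d (le_refl N)]
    rw [Finset.sum_biUnion]
    · apply Finset.sum_congr rfl
      intro e _
      rw [MvPowerSeries.coeff_mul, Finset.sum_mul]
      apply Finset.sum_congr rfl
      intro q hq
      rw [Finset.HasAntidiagonal.mem_antidiagonal] at hq
      rw [hhdef]; dsimp only
      rw [← hP, hq, mul_assoc]  -- careful
    · intro e₁ _ e₂ _ hne
      apply Finset.disjoint_left.mpr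
      intro q hq₁ hq₂
      rw [Finset.HasAntidiagonal.mem_antidiagonal] at hq₁ hq₂
      exact hne (hq₁ ▸ hq₂)
  -- RHS
  have hR : MvPowerSeries.coeff d
        (MvPowerSeries.substitute a f * MvPowerSeries.substitute a g) =
      ∑ q ∈ T ×ˢ T, h q := by
    rw [MvPowerSeries.coeff_mul]
    have : ∀ q ∈ Finset.HasAntidiagonal.antidiagonal d,
        MvPowerSeries.coeff q.1 (MvPowerSeries.substitute a f) *
          MvPowerSeries.coeff q.2 (MvPowerSeries.substitute a g) =
        ∑ e₁ ∈ T, ∑ e₂ ∈ T, MvPowerSeries.coeff e₁ f * MvPowerSeries.coeff e₂ g *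
          (MvPowerSeries.coeff q.1 (P e₁) * MvPowerSeries.coeff q.2 (P e₂)) := by
      intro q hq
      rw [Finset.HasAntidiagonal.mem_antidiagonal] at hq
      have h1 : fdeg q.1 ≤ N := by
        rw [hNdef, ← hq, fdeg_add]; omega
      have h2 : fdeg q.2 ≤ N := by
        rw [hNdef, ← hq, fdeg_add]; omega
      rw [coeff_substitute_eq_sum a ha f q.1 h1, coeff_substitute_eq_sum a ha g q.2 h2,
        Finset.sum_mul]
      apply Finset.sum_congr rfl
      intro e₁ _
      rw [Finset.mul_sum]
      apply Finset.sum_congr rfl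
      intro e₂ _
      ring
    rw [Finset.sum_congr rfl this, Finset.sum_comm]
    rw [Finset.sum_product]
    apply Finset.sum_congr rfl
    intro e₁ _
    rw [Finset.sum_comm]
    apply Finset.sum_congr rfl
    intro e₂ _
    rw [hhdef]; dsimp only
    rw [MvPowerSeries.coeff_mul (φ := P e₁), Finset.mul_sum]
  rw [hL, hR]
  have hsub1 : T.biUnion Finset.HasAntidiagonal.antidiagonal ⊆ T.biUnion Finset.HasAntidiagonal.antidiagonal ∪ T ×ˢ T :=
    Finset.subset_union_left
  have hsub2 : T ×ˢ T ⊆ T.biUnion Finset.HasAntidiagonal.antidiagonal ∪ T ×ˢ T :=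
    Finset.subset_union_right
  rw [Finset.sum_subset hsub1 ?_, Finset.sum_subset hsub2 ?_]
  · intro q _ hq
    apply hvanish
    rw [Finset.mem_product, hmemT, hmemT] at hq
    push_neg at hq
    rcases le_or_gt (fdeg q.1) N with h1 | h1
    · have := hq h1; omega
    · omega
  · intro q _ hq
    apply hvanish
    by_contra hcon
    push_neg at hcon
    apply hq
    rw [Finset.mem_biUnion]
    refine ⟨q.1 + q.2, ?_, ?_⟩
    · rw [hmemT, fdeg_add]; omega
    · rw [Finset.HasAntidiagonal.mem_antidiagonal]

end Subst
section Div
open Finset MvPowerSeries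

variable {σ τ R : Type*} [Fintype σ] [DecidableEq σ] [Fintype τ] [DecidableEq τ] [CommRing R]

omit [DecidableEq τ] in
lemma ordGE_sum {ι : Type*} (t : Finset ι) (n : ℕ) (f : ι → MvPowerSeries τ R)
    (h : ∀ i ∈ t, OrdGE n (f i)) : OrdGE n (∑ i ∈ t, f i) := by
  intro d hd
  rw [map_sum]
  exact Finset.sum_eq_zero fun i hi => h i hi d hd

lemma sub_dvd_substitute_sub (f : MvPowerSeries σ R) (a b : σ → MvPowerSeries τ R)
    (ha : ∀ s, MvPowerSeries.constantCoeff (a s) = 0)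
    (hb : ∀ s, MvPowerSeries.constantCoeff (b s) = 0) (s₀ : σ)
    (hagree : ∀ s, s ≠ s₀ → a s = b s) :
    (a s₀ - b s₀) ∣ MvPowerSeries.substitute a f - MvPowerSeries.substitute b f := by
  classical
  set W : (σ →₀ ℕ) → MvPowerSeries τ R := fun e =>
    (∑ i ∈ Finset.range (e s₀), (a s₀) ^ i * (b s₀) ^ (e s₀ - 1 - i)) *
      ∏ s ∈ Finset.univ.erase s₀, a s ^ e s with hWdef
  -- key algebraic identity
  have key : ∀ e : σ →₀ ℕ, (e.prod fun s k => a s ^ k) - (e.prod fun s k => b s ^ k) =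
      (a s₀ - b s₀) * W e := by
    intro e
    rw [Finsupp.prod_fintype _ _ (fun i => pow_zero _),
      Finsupp.prod_fintype _ _ (fun i => pow_zero _)]
    rw [← Finset.mul_prod_erase Finset.univ (fun s => a s ^ e s) (Finset.mem_univ s₀),
      ← Finset.mul_prod_erase Finset.univ (fun s => b s ^ e s) (Finset.mem_univ s₀)]
    have hQ : ∏ s ∈ Finset.univ.erase s₀, b s ^ e s = ∏ s ∈ Finset.univ.erase s₀, a s ^ e s :=
      Finset.prod_congr rfl fun s hs => by
        rw [hagree s (Finset.ne_of_mem_erase hs)]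
    rw [hQ, hWdef]
    have := geom_sum₂_mul (a s₀) (b s₀) (e s₀)
    set G := ∑ i ∈ Finset.range (e s₀), (a s₀) ^ i * (b s₀) ^ (e s₀ - 1 - i)
    set Q := ∏ s ∈ Finset.univ.erase s₀, a s ^ e s
    calc (a s₀) ^ e s₀ * Q - (b s₀) ^ e s₀ * Q
        = ((a s₀) ^ e s₀ - (b s₀) ^ e s₀) * Q := by ring
      _ = (G * (a s₀ - b s₀)) * Q := by rw [this]
      _ = (a s₀ - b s₀) * (G * Q) := by ring
  -- order bound for W e
  have hWord : ∀ (e : σ →₀ ℕ) (d : τ →₀ ℕ), fdeg d + 1 < fdeg e →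
      MvPowerSeries.coeff d (W e) = 0 := by
    intro e d hde
    have hG : OrdGE (e s₀ - 1)
        (∑ i ∈ Finset.range (e s₀), (a s₀) ^ i * (b s₀) ^ (e s₀ - 1 - i)) := by
      apply ordGE_sum
      intro i hi
      rw [Finset.mem_range] at hi
      have : OrdGE (i + (e s₀ - 1 - i)) ((a s₀) ^ i * (b s₀) ^ (e s₀ - 1 - i)) :=
        ordGE_mul (ordGE_pow (ordGE_one (ha s₀)) i) (ordGE_pow (ordGE_one (hb s₀)) _)
      exact ordGE_mono this (by omega)
    have hQ : OrdGE (∑ s ∈ Finset.univ.erase s₀, e s)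
        (∏ s ∈ Finset.univ.erase s₀, a s ^ e s) :=
      ordGE_prod _ _ _ fun s _ => ordGE_pow (ordGE_one (ha s)) (e s)
    have hsum : fdeg e = e s₀ + ∑ s ∈ Finset.univ.erase s₀, e s := by
      rw [fdeg, ← Finset.add_sum_erase Finset.univ e (Finset.mem_univ s₀)]
    apply ordGE_mul hG hQ
    omega
  -- define the cofactor H
  set H : MvPowerSeries τ R := fun d => ∑ᶠ e : σ →₀ ℕ,
    MvPowerSeries.coeff e f * MvPowerSeries.coeff d (W e) with hHdef
  refine ⟨H, ?_⟩
  ext d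
  set T := (finite_fdeg_le (σ := σ) (fdeg d + 1)).toFinset with hTdef
  have hmemT : ∀ e : σ →₀ ℕ, e ∈ T ↔ fdeg e ≤ fdeg d + 1 := by
    intro e; simp [hTdef, Set.Finite.mem_toFinset]
  have hHcoeff : ∀ d₂ : τ →₀ ℕ, fdeg d₂ ≤ fdeg d →
      MvPowerSeries.coeff d₂ H = ∑ e ∈ T,
        MvPowerSeries.coeff e f * MvPowerSeries.coeff d₂ (W e) := by
    intro d₂ hd₂
    have : MvPowerSeries.coeff d₂ H = ∑ᶠ e : σ →₀ ℕ,
        MvPowerSeries.coeff e f * MvPowerSeries.coeff d₂ (W e) := rfl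
    rw [this]
    apply finsum_eq_finset_sum_of_support_subset
    intro e he
    simp only [Function.mem_support] at he
    rw [Finset.mem_coe, hmemT]
    by_contra hcon
    exact he (by rw [hWord e d₂ (by omega), mul_zero])
  -- left side
  rw [map_sub, coeff_substitute_eq_sum a ha f d (Nat.le_succ _),
    coeff_substitute_eq_sum b hb f d (Nat.le_succ _), ← hTdef, ← Finset.sum_sub_distrib]
  -- right side
  rw [MvPowerSeries.coeff_mul]
  have hrhs : ∀ q ∈ Finset.HasAntidiagonal.antidiagonal d,
      MvPowerSeries.coeff q.1 (a s₀ - b s₀) * MvPowerSeries.coeff q.2 H =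
      ∑ e ∈ T, MvPowerSeries.coeff e f *
        (MvPowerSeries.coeff q.1 (a s₀ - b s₀) * MvPowerSeries.coeff q.2 (W e)) := by
    intro q hq
    rw [Finset.HasAntidiagonal.mem_antidiagonal] at hq
    have : fdeg q.2 ≤ fdeg d := by rw [← hq, fdeg_add]; omega
    rw [hHcoeff q.2 this, Finset.mul_sum]
    apply Finset.sum_congr rfl
    intro e _
    ring
  rw [Finset.sum_congr rfl hrhs, Finset.sum_comm]
  apply Finset.sum_congr rfl
  intro e _
  rw [← mul_sub, ← map_sub, key e, MvPowerSeries.coeff_mul, Finset.mul_sum]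
end Div
section Main
open Finset MvPowerSeries

variable {R : Type*} [CommRing R]

lemma vec2_const {τ : Type*} [Fintype τ] (u v : MvPowerSeries τ R)
    (hu : MvPowerSeries.constantCoeff u = 0) (hv : MvPowerSeries.constantCoeff v = 0) :
    ∀ s : Fin 2, MvPowerSeries.constantCoeff (![u, v] s) = 0 := by
  intro s
  fin_cases s <;> simpa

lemma constantCoeff_nSeries (F : MvPowerSeries (Fin 2) R)
    (hF0 : MvPowerSeries.coeff 0 F = 0) (n : ℕ) :
    MvPowerSeries.constantCoeff (MvPowerSeries.nSeries F n) = 0 := by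
  induction n with
  | zero => simp [MvPowerSeries.nSeries]
  | succ k ih =>
      show MvPowerSeries.constantCoeff
        (MvPowerSeries.substitute ![MvPowerSeries.nSeries F k, PowerSeries.X] F) = 0
      apply constantCoeff_substitute _ _ _ hF0
      exact vec2_const _ _ ih PowerSeries.constantCoeff_X

variable (F : MvPowerSeries (Fin 2) R) (hF0 : MvPowerSeries.coeff 0 F = 0)
  (p : ℕ)

include hF0 in
lemma nSeries_add_p_mem (n : ℕ) :
    MvPowerSeries.nSeries F (n + p) - MvPowerSeries.nSeries F n ∈
      Ideal.span {MvPowerSeries.nSeries F p} := by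
  induction n with
  | zero =>
      rw [zero_add]
      show MvPowerSeries.nSeries F p - 0 ∈ _
      rw [sub_zero]
      exact Ideal.subset_span rfl
  | succ k ih =>
      have heq : k + 1 + p = (k + p) + 1 := by omega
      rw [heq]
      show MvPowerSeries.substitute ![MvPowerSeries.nSeries F (k + p), PowerSeries.X] F -
        MvPowerSeries.substitute ![MvPowerSeries.nSeries F k, PowerSeries.X] F ∈ _
      have hdvd := sub_dvd_substitute_sub F
        ![MvPowerSeries.nSeries F (k + p), PowerSeries.X]
        ![MvPowerSeries.nSeries F k, PowerSeries.X]
        (vec2_const _ _ (constantCoeff_nSeries F hF0 _) PowerSeries.constantCoeff_X)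
        (vec2_const _ _ (constantCoeff_nSeries F hF0 _) PowerSeries.constantCoeff_X)
        (0 : Fin 2) ?_
      · obtain ⟨c, hc⟩ := hdvd
        rw [hc]
        simp only [Matrix.cons_val_zero]
        exact Ideal.mul_mem_right c _ ih
      · intro s hs
        fin_cases s
        · exact absurd rfl hs
        · rfl

include hF0 in
lemma nSeries_mod_mem (m : ℕ) :
    MvPowerSeries.nSeries F m - MvPowerSeries.nSeries F (m % p) ∈
      Ideal.span {MvPowerSeries.nSeries F p} := by
  have key : ∀ c n : ℕ, MvPowerSeries.nSeries F (n + c * p) - MvPowerSeries.nSeries F n ∈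
      Ideal.span {MvPowerSeries.nSeries F p} := by
    intro c
    induction c with
    | zero => intro n; simp
    | succ k ih =>
        intro n
        have heq : n + (k + 1) * p = (n + k * p) + p := by ring
        rw [heq]
        have h1 := nSeries_add_p_mem F hF0 p (n + k * p)
        have h2 := ih n
        have := Ideal.add_mem _ h1 h2
        rwa [sub_add_sub_cancel] at this
  have h := key (m / p) (m % p)
  rwa [Nat.mod_add_div' m p] at h

lemma prod_sub_mem {A : Type*} [CommRing A] (I : Ideal A) (s : Finset ℕ) (f g : ℕ → A)
    (h : ∀ k ∈ s, f k - g k ∈ I) : (∏ k ∈ s, f k) - ∏ k ∈ s, g k ∈ I := by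
  apply Ideal.Quotient.eq.mp
  rw [map_prod, map_prod]
  exact Finset.prod_congr rfl fun k hk => Ideal.Quotient.eq.mpr (h k hk)

lemma prod_reindex {A : Type*} [CommMonoid A] {p j : ℕ} (hp : p.Prime) (hj : ¬ p ∣ j)
    (h : ℕ → A) :
    ∏ k ∈ Finset.Icc 1 (p - 1), h (j * k % p) = ∏ k ∈ Finset.Icc 1 (p - 1), h k := by
  haveI : Fact p.Prime := ⟨hp⟩
  have hp1 : 1 ≤ p := hp.one_lt.le.trans' (by omega)
  have hcop : p.Coprime j := (Nat.Prime.coprime_iff_not_dvd hp).mpr hj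
  have hmem : ∀ k ∈ Finset.Icc 1 (p - 1), j * k % p ∈ Finset.Icc 1 (p - 1) := by
    intro k hk
    rw [Finset.mem_Icc] at hk ⊢
    have hlt : j * k % p < p := Nat.mod_lt _ hp.pos
    have hne : j * k % p ≠ 0 := by
      intro h0
      have hdvd : p ∣ j * k := Nat.dvd_of_mod_eq_zero h0
      rcases (Nat.Prime.dvd_mul hp).mp hdvd with h' | h'
      · exact hj h'
      · have := Nat.le_of_dvd (by omega) h'
        omega
    omega
  apply Finset.prod_bij (fun k _ => j * k % p) hmem
  · intro k₁ hk₁ k₂ hk₂ heq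
    rw [Finset.mem_Icc] at hk₁ hk₂
    have : k₁ ≡ k₂ [MOD p] := Nat.ModEq.cancel_left_of_coprime hcop heq
    have h1 : k₁ % p = k₂ % p := this
    rw [Nat.mod_eq_of_lt (by omega), Nat.mod_eq_of_lt (by omega)] at h1
    exact h1
  · intro b hb
    rw [Finset.mem_Icc] at hb
    set x : ZMod p := (b : ZMod p) * (j : ZMod p)⁻¹ with hxdef
    have hjne : (j : ZMod p) ≠ 0 := by
      rw [Ne, ZMod.natCast_eq_zero_iff]; exact hj
    have hx : ((x.val : ℕ) : ZMod p) = x := by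
      rw [ZMod.natCast_val, ZMod.cast_id]
    have hcast : ((j * x.val : ℕ) : ZMod p) = (b : ZMod p) := by
      push_cast
      rw [hx, hxdef]
      field_simp
    have h2 : j * x.val % p = b := by
      have := (ZMod.natCast_eq_natCast_iff _ _ _).mp hcast
      have h3 : j * x.val % p = b % p := this
      rwa [Nat.mod_eq_of_lt (show b < p by omega)] at h3
    refine ⟨x.val, ?_, h2⟩
    rw [Finset.mem_Icc]
    have hlt : x.val < p := ZMod.val_lt x
    have hne : x.val ≠ 0 := by
      intro h0
      rw [h0] at h2
      simp at h2
      omega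
    omega
  · intro a _
    rfl

end Main
section Main2
open Finset MvPowerSeries

variable {R : Type*} [CommRing R] (F : MvPowerSeries (Fin 2) R)
  (hF0 : MvPowerSeries.coeff 0 F = 0) (p : ℕ)

lemma constX1 : ∀ s : Unit,
    MvPowerSeries.constantCoeff
      ((fun _ : Unit => (MvPowerSeries.X 1 : MvPowerSeries (Fin 2) R)) s) = 0 :=
  fun _ => MvPowerSeries.constantCoeff_X 1

lemma subX1_span (a b : PowerSeries R) (hm : a - b ∈ Ideal.span {MvPowerSeries.nSeries F p}) :
    PowerSeries.substitute (MvPowerSeries.X 1 : MvPowerSeries (Fin 2) R) a -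
      PowerSeries.substitute (MvPowerSeries.X 1) b ∈
    Ideal.span {PowerSeries.substitute (MvPowerSeries.X 1 : MvPowerSeries (Fin 2) R)
      (MvPowerSeries.nSeries F p)} := by
  obtain ⟨c, hc⟩ := Ideal.mem_span_singleton'.mp hm
  apply Ideal.mem_span_singleton'.mpr
  refine ⟨MvPowerSeries.substitute (fun _ : Unit => MvPowerSeries.X 1) c, ?_⟩
  show MvPowerSeries.substitute (fun _ : Unit => MvPowerSeries.X 1) c *
      MvPowerSeries.substitute (fun _ : Unit => MvPowerSeries.X 1)
        (MvPowerSeries.nSeries F p) =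
    MvPowerSeries.substitute (fun _ : Unit => MvPowerSeries.X 1) a -
      MvPowerSeries.substitute (fun _ : Unit => MvPowerSeries.X 1) b
  rw [← substitute_mul _ (constX1 (R := R)), hc, substitute_sub _ (constX1 (R := R))]

include hF0 in
lemma constantCoeff_subX1_nSeries (m : ℕ) :
    MvPowerSeries.constantCoeff
      (PowerSeries.substitute (MvPowerSeries.X 1 : MvPowerSeries (Fin 2) R)
        (MvPowerSeries.nSeries F m)) = 0 := by
  apply constantCoeff_substitute _ (constX1 (R := R))
  rw [MvPowerSeries.coeff_zero_eq_constantCoeff_apply]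
  exact constantCoeff_nSeries F hF0 m

include hF0 in
lemma term_span (m m' : ℕ)
    (hm : MvPowerSeries.nSeries F m - MvPowerSeries.nSeries F m' ∈
      Ideal.span {MvPowerSeries.nSeries F p}) :
    MvPowerSeries.substitute
        ![(MvPowerSeries.X 0 : MvPowerSeries (Fin 2) R),
          PowerSeries.substitute (MvPowerSeries.X 1) (MvPowerSeries.nSeries F m)] F -
      MvPowerSeries.substitute
        ![(MvPowerSeries.X 0 : MvPowerSeries (Fin 2) R),
          PowerSeries.substitute (MvPowerSeries.X 1) (MvPowerSeries.nSeries F m')] F ∈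
    Ideal.span {PowerSeries.substitute (MvPowerSeries.X 1 : MvPowerSeries (Fin 2) R)
      (MvPowerSeries.nSeries F p)} := by
  have hdvd := sub_dvd_substitute_sub F
    ![(MvPowerSeries.X 0 : MvPowerSeries (Fin 2) R),
      PowerSeries.substitute (MvPowerSeries.X 1) (MvPowerSeries.nSeries F m)]
    ![(MvPowerSeries.X 0 : MvPowerSeries (Fin 2) R),
      PowerSeries.substitute (MvPowerSeries.X 1) (MvPowerSeries.nSeries F m')]
    (vec2_const _ _ (MvPowerSeries.constantCoeff_X 0)
      (constantCoeff_subX1_nSeries F hF0 m))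
    (vec2_const _ _ (MvPowerSeries.constantCoeff_X 0)
      (constantCoeff_subX1_nSeries F hF0 m'))
    (1 : Fin 2) ?_
  · obtain ⟨c, hc⟩ := hdvd
    rw [hc]
    simp only [Matrix.cons_val_one, Matrix.head_cons]
    exact Ideal.mul_mem_right c _ (subX1_span F p _ _ hm)
  · intro s hs
    fin_cases s
    · rfl
    · exact absurd rfl hs

end Main2

theorem stmt8' {R : Type*} [CommRing R] (F : MvPowerSeries (Fin 2) R)
    (hF0 : MvPowerSeries.coeff 0 F = 0)
    (p : ℕ) (hp : p.Prime) (j : ℕ) (hj : ¬ p ∣ j) :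
    ((∏ k ∈ Finset.Icc 1 (p - 1), MvPowerSeries.nSeries F (j * k)) -
        ∏ k ∈ Finset.Icc 1 (p - 1), MvPowerSeries.nSeries F k ∈
      Ideal.span {MvPowerSeries.nSeries F p}) ∧
    ((∏ k ∈ Finset.Icc 1 (p - 1),
        MvPowerSeries.substitute
          ![(MvPowerSeries.X 0 : MvPowerSeries (Fin 2) R),
            PowerSeries.substitute (MvPowerSeries.X 1)
              (MvPowerSeries.nSeries F (j * k))] F) -
      (∏ k ∈ Finset.Icc 1 (p - 1),
        MvPowerSeries.substitute
          ![(MvPowerSeries.X 0 : MvPowerSeries (Fin 2) R),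
            PowerSeries.substitute (MvPowerSeries.X 1)
              (MvPowerSeries.nSeries F k)] F) ∈
      Ideal.span {PowerSeries.substitute
        ((MvPowerSeries.X 1 : MvPowerSeries (Fin 2) R))
        (MvPowerSeries.nSeries F p)}) := by
  constructor
  · have h2 := prod_sub_mem (Ideal.span {MvPowerSeries.nSeries F p}) (Finset.Icc 1 (p - 1))
      (fun k => MvPowerSeries.nSeries F (j * k))
      (fun k => MvPowerSeries.nSeries F (j * k % p))
      (fun k _ => nSeries_mod_mem F hF0 p (j * k))
    rwa [prod_reindex hp hj (fun m => MvPowerSeries.nSeries F m)] at h2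
  · have h2 := prod_sub_mem
      (Ideal.span {PowerSeries.substitute (MvPowerSeries.X 1 : MvPowerSeries (Fin 2) R)
        (MvPowerSeries.nSeries F p)}) (Finset.Icc 1 (p - 1))
      (fun k => MvPowerSeries.substitute
        ![(MvPowerSeries.X 0 : MvPowerSeries (Fin 2) R),
          PowerSeries.substitute (MvPowerSeries.X 1) (MvPowerSeries.nSeries F (j * k))] F)
      (fun k => MvPowerSeries.substitute
        ![(MvPowerSeries.X 0 : MvPowerSeries (Fin 2) R),
          PowerSeries.substitute (MvPowerSeries.X 1) (MvPowerSeries.nSeries F (j * k % p))] F)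
      (fun k _ => term_span F hF0 p _ _ (nSeries_mod_mem F hF0 p (j * k)))
    rwa [prod_reindex hp hj (fun m => MvPowerSeries.substitute
      ![(MvPowerSeries.X 0 : MvPowerSeries (Fin 2) R),
        PowerSeries.substitute (MvPowerSeries.X 1) (MvPowerSeries.nSeries F m)] F)] at h2

/-- Let `R` be a commutative ring and `F ∈ R⟦x,y⟧` a one-dimensional
formal group law (zero constant coefficient, `F(x,0) = x`, `F(0,y) = y`,
`F(F(x,y),z) = F(x,F(y,z))`), with `n`-series `[n]_F`.  Let `p` be a prime and `j`
a natural number not divisible by `p`.  Then: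
(i) `∏_{k=1}^{p-1} [j·k]_F(t) − ∏_{k=1}^{p-1} [k]_F(t)` lies in the ideal of `R⟦t⟧`
generated by `[p]_F(t)`; and
(ii) `∏_{k=1}^{p-1} F(x, [j·k]_F(t)) − ∏_{k=1}^{p-1} F(x, [k]_F(t))` lies in the
ideal of `R⟦x,t⟧` generated by `[p]_F(t)` (with `x = X 0`, `t = X 1`). -/
theorem stmt8 {R : Type*} [CommRing R] (F : MvPowerSeries (Fin 2) R)
    (hF0 : MvPowerSeries.coeff 0 F = 0)
    (hFx0 : MvPowerSeries.substitute
      ![(MvPowerSeries.X 0 : MvPowerSeries (Fin 2) R), 0] F = MvPowerSeries.X 0)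
    (hF0y : MvPowerSeries.substitute
      ![(0 : MvPowerSeries (Fin 2) R), MvPowerSeries.X 1] F = MvPowerSeries.X 1)
    (hFassoc : MvPowerSeries.substitute
        ![MvPowerSeries.substitute
            ![(MvPowerSeries.X 0 : MvPowerSeries (Fin 3) R), MvPowerSeries.X 1] F,
          MvPowerSeries.X 2] F =
      MvPowerSeries.substitute
        ![(MvPowerSeries.X 0 : MvPowerSeries (Fin 3) R),
          MvPowerSeries.substitute ![MvPowerSeries.X 1, MvPowerSeries.X 2] F] F)
    (p : ℕ) (hp : p.Prime) (j : ℕ) (hj : ¬ p ∣ j) :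
    ((∏ k ∈ Finset.Icc 1 (p - 1), MvPowerSeries.nSeries F (j * k)) -
        ∏ k ∈ Finset.Icc 1 (p - 1), MvPowerSeries.nSeries F k ∈
      Ideal.span {MvPowerSeries.nSeries F p}) ∧
    ((∏ k ∈ Finset.Icc 1 (p - 1),
        MvPowerSeries.substitute
          ![(MvPowerSeries.X 0 : MvPowerSeries (Fin 2) R),
            PowerSeries.substitute (MvPowerSeries.X 1)
              (MvPowerSeries.nSeries F (j * k))] F) -
      (∏ k ∈ Finset.Icc 1 (p - 1),
        MvPowerSeries.substitute
          ![(MvPowerSeries.X 0 : MvPowerSeries (Fin 2) R),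
            PowerSeries.substitute (MvPowerSeries.X 1)
              (MvPowerSeries.nSeries F k)] F) ∈
      Ideal.span {PowerSeries.substitute
        ((MvPowerSeries.X 1 : MvPowerSeries (Fin 2) R))
        (MvPowerSeries.nSeries F p)}) := by
  exact stmt8' F hF0 p hp j hj
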